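/- Let r ≥ 1, ε₁ ≥ 0, ε₂ ≥ 0 be real numbers with r·ε₁ ≤ 1/2 and r·ε₂ ≤ 1. Then for every real S ≥ 0, (1 + r²ε₁ + 2rε₂(1 + rε₁)S + rε₂S²) / (1 − rε₁ + S²) ≤ 1 + 4rε₂ + 4r²ε₁. -/
import Mathlib


/-- Rough estimate (38) of Section IV: for `r ≥ 1`, `ε₁ ≥ 0`, `ε₂ ≥ 0` with `r ε₁ ≤ 1/2`
and `r ε₂ ≤ 1`, and every `S ≥ 0`,
`(1 + r²ε₁ + 2rε₂(1 + rε₁)S + rε₂S²) / (1 − rε₁ + S²) ≤ 1 + 4rε₂ + 4r²ε₁`. -/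
theorem rough_estimate (r : ℕ) (hr : 1 ≤ r) (ε₁ ε₂ : ℝ) (hε₁ : 0 ≤ ε₁) (hε₂ : 0 ≤ ε₂)
    (h₁ : (r : ℝ) * ε₁ ≤ 1 / 2) (h₂ : (r : ℝ) * ε₂ ≤ 1) (S : ℝ) (hS : 0 ≤ S) :
    (1 + (r : ℝ) ^ 2 * ε₁ + 2 * r * ε₂ * (1 + r * ε₁) * S + r * ε₂ * S ^ 2) /
        (1 - r * ε₁ + S ^ 2) ≤ 1 + 4 * r * ε₂ + 4 * (r : ℝ) ^ 2 * ε₁ := by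
  have hr' : (1 : ℝ) ≤ (r : ℝ) := by exact_mod_cast hr
  have ha : 0 ≤ (r : ℝ) * ε₁ := by positivity
  have hb : 0 ≤ (r : ℝ) * ε₂ := by positivity
  have hc : 0 ≤ (r : ℝ) ^ 2 * ε₁ := by positivity
  have hca : (r : ℝ) * ε₁ ≤ (r : ℝ) ^ 2 * ε₁ := by nlinarith
  have h₁' : 0 ≤ 1 / 2 - (r : ℝ) * ε₁ := by linarith
  have hq : (0 : ℝ) ≤ 3 * S ^ 2 - 3 * S + 2 := by nlinarith [sq_nonneg (2 * S - 1)]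
  have hD : 0 < 1 - (r : ℝ) * ε₁ + S ^ 2 := by nlinarith
  rw [div_le_iff₀ hD]
  nlinarith [mul_nonneg hb hq, mul_nonneg hc h₁', mul_nonneg hb h₁',
    mul_nonneg (mul_nonneg hb hS) h₁', mul_nonneg hc (sq_nonneg S),
    sq_nonneg S, mul_nonneg hb hS]
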